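/- Let R be a ring and M an automorphism-invariant right R-module with injective hull E(M). Suppose E(M) = E₁ ⊕ E₂ and there exists an automorphism σ₁ of E₁ such that id_{E₁} − σ₁ is also an automorphism of E₁. Then M = (M ∩ E₁) ⊕ (M ∩ E₂). -/

import Mathlib

universe u v w

section Defs

variable (A : Type u) [Ring A]

/-- `N` is an essential submodule of `M`: it meets every nonzero submodule nontrivially. -/
def IsEssentialIn {M : Type v} [AddCommGroup M] [Module A M] (N : Submodule A M) : Prop :=
  ∀ K : Submodule A M, K ≠ ⊥ → N ⊓ K ≠ ⊥

/-- `i : M →ₗ[A] E` realizes `E` as an injective hull of `M`: `E` is injective and the image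
of `M` is an essential submodule of `E`. -/
def IsInjHull (M : Type v) [AddCommGroup M] [Module A M]
    (E : Type v) [AddCommGroup E] [Module A E] (i : M →ₗ[A] E) : Prop :=
  Function.Injective i ∧ Module.Injective A E ∧ IsEssentialIn A (LinearMap.range i)

/-- `M` is automorphism-invariant: for any injective hull `E` of `M`, the image of `M` is
invariant under every automorphism of `E`. -/
def IsAutInv (M : Type v) [AddCommGroup M] [Module A M] : Prop :=
  ∀ (E : Type v) [AddCommGroup E] [Module A E] (i : M →ₗ[A] E),
    IsInjHull A M E i →
      ∀ σ : E ≃ₗ[A] E, (LinearMap.range i).map (σ : E →ₗ[A] E) ≤ LinearMap.range i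

/-- `M` is quasi-injective: every homomorphism from a submodule of `M` into `M` extends to an
endomorphism of `M`. -/
def IsQuasiInj (M : Type v) [AddCommGroup M] [Module A M] : Prop :=
  ∀ (N : Submodule A M) (f : ↥N →ₗ[A] M), ∃ g : M →ₗ[A] M, ∀ n : ↥N, g ↑n = f n

/-- `M` is pseudo-injective: every monomorphism from a submodule of `M` into `M` extends to an
endomorphism of `M`. -/
def IsPseudoInj (M : Type v) [AddCommGroup M] [Module A M] : Prop :=
  ∀ (N : Submodule A M) (f : ↥N →ₗ[A] M), Function.Injective f →
    ∃ g : M →ₗ[A] M, ∀ n : ↥N, g ↑n = f n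

/-- `M` is quasi-projective: every homomorphism `M → M/N` lifts to an endomorphism of `M`. -/
def IsQuasiProj (M : Type v) [AddCommGroup M] [Module A M] : Prop :=
  ∀ (N : Submodule A M) (f : M →ₗ[A] M ⧸ N), ∃ g : M →ₗ[A] M, N.mkQ.comp g = f

/-- `M` is an indecomposable module: nonzero and not an (internal) direct sum of two nonzero
submodules. -/
def IsIndecomposableMod (M : Type v) [AddCommGroup M] [Module A M] : Prop :=
  Nontrivial M ∧ ∀ N₁ N₂ : Submodule A M, IsCompl N₁ N₂ → N₁ = ⊥ ∨ N₂ = ⊥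

/-- `M` is a uniform module: nonzero, and any two nonzero submodules intersect nontrivially. -/
def IsUniformMod (M : Type v) [AddCommGroup M] [Module A M] : Prop :=
  Nontrivial M ∧ ∀ N₁ N₂ : Submodule A M, N₁ ≠ ⊥ → N₂ ≠ ⊥ → N₁ ⊓ N₂ ≠ ⊥

/-- `M` is uniserial: its submodules are linearly ordered by inclusion. -/
def IsUniserialMod (M : Type v) [AddCommGroup M] [Module A M] : Prop :=
  ∀ N₁ N₂ : Submodule A M, N₁ ≤ N₂ ∨ N₂ ≤ N₁

/-- `M` is a local module: it has a unique maximal submodule containing every proper submodule. -/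
def IsLocalMod (M : Type v) [AddCommGroup M] [Module A M] : Prop :=
  ∃ N : Submodule A M, N ≠ ⊤ ∧ ∀ K : Submodule A M, K ≠ ⊤ → K ≤ N

/-- The socle of `M`: the sum of all simple submodules. -/
def SocleOf (M : Type v) [AddCommGroup M] [Module A M] : Submodule A M :=
  sSup {S : Submodule A M | IsSimpleModule A ↥S}

/-- The socle of a submodule `N` of `M`, as a submodule of `M`: the sum of all simple
submodules of `M` contained in `N`. -/
def SocleIn {M : Type v} [AddCommGroup M] [Module A M] (N : Submodule A M) : Submodule A M :=
  sSup {S : Submodule A M | S ≤ N ∧ IsSimpleModule A ↥S}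

/-- `M` is a singular module: every element is annihilated by an essential (right) ideal. -/
def IsSingularMod (M : Type v) [AddCommGroup M] [Module A M] : Prop :=
  ∀ m : M, IsEssentialIn A (LinearMap.ker (LinearMap.toSpanSingleton A M m))

/-- `M` is a cyclic module. -/
def IsCyclicMod (M : Type v) [AddCommGroup M] [Module A M] : Prop :=
  ∃ m : M, Submodule.span A {m} = ⊤

end Defs

section RingDefs

variable (R : Type u) [Ring R]

/-- `R` is of right automorphism-invariant type: every finitely generated indecomposable
right `R`-module (i.e. left `Rᵐᵒᵖ`-module) is automorphism-invariant. -/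
def IsRAIType : Prop :=
  ∀ (M : Type u) [AddCommGroup M] [Module Rᵐᵒᵖ M], Module.Finite Rᵐᵒᵖ M →
    IsIndecomposableMod Rᵐᵒᵖ M → IsAutInv Rᵐᵒᵖ M

/-- `R` is an indecomposable ring: it is nonzero and is not the direct sum of two nonzero
two-sided ideals. -/
def IsIndecRing : Prop :=
  Nontrivial R ∧ ¬ ∃ I J : Ideal R, (∀ x ∈ I, ∀ r : R, x * r ∈ I) ∧
    (∀ x ∈ J, ∀ r : R, x * r ∈ J) ∧ I ≠ ⊥ ∧ J ≠ ⊥ ∧ IsCompl I J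

/-- The right ideal `xR` of `R`. -/
def RtIdeal (x : R) : Submodule Rᵐᵒᵖ R := Submodule.span Rᵐᵒᵖ ({x} : Set R)

/-- The right ideal `xJ(R)` of `R`, where `J(R)` is the Jacobson radical. -/
def RtIdealJ (x : R) : Submodule Rᵐᵒᵖ R :=
  Submodule.span Rᵐᵒᵖ ((fun j => x * j) '' ((Ideal.jacobson (⊥ : Ideal R) : Ideal R) : Set R))

/-- The module `xR / xJ(R)`. -/
abbrev TopQuot (x : R) :=
  ↥(RtIdeal R x) ⧸ Submodule.comap (RtIdeal R x).subtype (RtIdealJ R x)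

end RingDefs

/-- If `M` is an automorphism-invariant right `R`-module, essential in its injective
hull `E = E₁ ⊕ E₂`, and `E₁` admits an automorphism `σ₁` with `id - σ₁` also an automorphism,
then `M = (M ∩ E₁) ⊕ (M ∩ E₂)`. -/
theorem stmt_1 (R : Type u) [Ring R]
    (E : Type v) [AddCommGroup E] [Module Rᵐᵒᵖ E] (hinjE : Module.Injective Rᵐᵒᵖ E)
    (M : Submodule Rᵐᵒᵖ E) (hess : IsEssentialIn Rᵐᵒᵖ M)
    (hinv : ∀ σ : E ≃ₗ[Rᵐᵒᵖ] E, M.map (σ : E →ₗ[Rᵐᵒᵖ] E) ≤ M)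
    (E₁ E₂ : Submodule Rᵐᵒᵖ E) (hcompl : IsCompl E₁ E₂)
    (σ₁ : ↥E₁ ≃ₗ[Rᵐᵒᵖ] ↥E₁)
    (hσ₁ : Function.Bijective ⇑((LinearMap.id : ↥E₁ →ₗ[Rᵐᵒᵖ] ↥E₁) - σ₁.toLinearMap)) :
    Disjoint (M ⊓ E₁) (M ⊓ E₂) ∧ M = (M ⊓ E₁) ⊔ (M ⊓ E₂) := by
  have hdisj : Disjoint (M ⊓ E₁) (M ⊓ E₂) := by
    have := hcompl.disjoint
    exact Disjoint.mono inf_le_right inf_le_right this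
  refine ⟨hdisj, le_antisymm ?_ (sup_le inf_le_left inf_le_left)⟩
  -- the equivalence E₁ × E₂ ≃ E
  set e : (↥E₁ × ↥E₂) ≃ₗ[Rᵐᵒᵖ] E := Submodule.prodEquivOfIsCompl E₁ E₂ hcompl with he
  have he_apply : ∀ p : ↥E₁ × ↥E₂, e p = (p.1 : E) + (p.2 : E) := by
    intro p
    simp [he, Submodule.coe_prodEquivOfIsCompl']
  -- lift an automorphism of E₁ to an automorphism of E
  let Φ : (↥E₁ ≃ₗ[Rᵐᵒᵖ] ↥E₁) → (E ≃ₗ[Rᵐᵒᵖ] E) := fun τ =>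
    e.symm ≪≫ₗ (τ.prodCongr (LinearEquiv.refl Rᵐᵒᵖ ↥E₂)) ≪≫ₗ e
  have hΦ_apply : ∀ (τ : ↥E₁ ≃ₗ[Rᵐᵒᵖ] ↥E₁) (p : ↥E₁ × ↥E₂),
      (Φ τ) (e p) = ((τ p.1 : E) + (p.2 : E)) := by
    intro τ p
    simp only [Φ, LinearEquiv.trans_apply, LinearEquiv.symm_apply_apply]
    rw [he_apply]
    rfl
  -- 1 - σ₁ as an automorphism
  let ψ : ↥E₁ ≃ₗ[Rᵐᵒᵖ] ↥E₁ :=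
    LinearEquiv.ofBijective ((LinearMap.id : ↥E₁ →ₗ[Rᵐᵒᵖ] ↥E₁) - σ₁.toLinearMap) hσ₁
  intro m hm
  set p : ↥E₁ × ↥E₂ := e.symm m with hp
  have hmp : e p = m := e.apply_symm_apply m
  have hm_sum : m = (p.1 : E) + (p.2 : E) := by rw [← hmp, he_apply]
  -- apply the automorphism Φ σ₁ : σ₁ p.1 + p.2 ∈ M
  have h1 : ((σ₁ p.1 : E) + (p.2 : E)) ∈ M := by
    have := hinv (Φ σ₁) (Submodule.mem_map_of_mem (f := ((Φ σ₁ : E →ₗ[Rᵐᵒᵖ] E))) hm)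
    rwa [show ((Φ σ₁ : E →ₗ[Rᵐᵒᵖ] E)) m = (σ₁ p.1 : E) + (p.2 : E) by
      rw [← hmp]; exact hΦ_apply σ₁ p] at this
  -- m - (σ₁ p.1 + p.2) = (ψ p.1 : E) ∈ M
  have h2 : ((ψ p.1 : E)) ∈ M := by
    have : m - ((σ₁ p.1 : E) + (p.2 : E)) ∈ M := M.sub_mem hm h1
    have heq : m - ((σ₁ p.1 : E) + (p.2 : E)) = (ψ p.1 : E) := by
      rw [hm_sum]
      show (p.1 : E) + (p.2 : E) - ((σ₁ p.1 : E) + (p.2 : E)) = ((p.1 - σ₁ p.1 : ↥E₁) : E)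
      push_cast
      abel
    rwa [heq] at this
  -- apply (Φ ψ).symm to recover p.1 ∈ M
  have h3 : ((p.1 : E)) ∈ M := by
    have := hinv (Φ ψ).symm (Submodule.mem_map_of_mem (f := (((Φ ψ).symm : E →ₗ[Rᵐᵒᵖ] E))) h2)
    have key : (((Φ ψ).symm : E →ₗ[Rᵐᵒᵖ] E)) ((ψ p.1 : E)) = (p.1 : E) := by
      have h4 : (Φ ψ) ((p.1 : E)) = ((ψ p.1 : E)) := by
        have : (p.1 : E) = e (p.1, 0) := by rw [he_apply]; simp
        rw [this, hΦ_apply]; simp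
      rw [← h4]
      exact (Φ ψ).symm_apply_apply _
    rwa [key] at this
  have h5 : ((p.2 : E)) ∈ M := by
    have : m - (p.1 : E) ∈ M := M.sub_mem hm h3
    rwa [hm_sum, add_sub_cancel_left] at this
  rw [hm_sum]
  exact Submodule.add_mem_sup ⟨h3, p.1.2⟩ ⟨h5, p.2.2⟩
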